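/- Let x : C([n],p) → ℝ and y : C([n],q) → ℝ (p ≤ q), and let D be the regular subdivision of Δ(p,q;n) induced by the weights e_I ↦ x_I, e_J ↦ y_J. If x and y satisfy the tropical Plücker relations (each separately) and the tropical incidence relations (for every S⊆T, |S|=p−1, |T|=q+1, the min over i ∈ T∖S of x_{S∪{i}}+y_{T∖{i}} is attained at least twice), then D and Δ(p,q;n) have the same 1-skeleton, i.e., D introduces no edges that are not edges of Δ(p,q;n). -/

import Mathlib

open Finset

/-- The 0/1 indicator vector `e_I ∈ ℝⁿ` of a subset `I ⊆ [n]`. -/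
def eInd {n : ℕ} (I : Finset (Fin n)) : Fin n → ℝ := fun i => if i ∈ I then 1 else 0

/-- The minimum of `f` over the finite set `s` is attained at least twice. -/
def MinTwiceOn {α : Type*} [DecidableEq α] (s : Finset α) (f : α → ℝ) : Prop :=
  ∃ a ∈ s, ∃ b ∈ s, a ≠ b ∧ f a = f b ∧ ∀ c ∈ s, f a ≤ f c

/-- The minimum of the three reals `a`, `b`, `c` is attained at least twice. -/
def ThreeMinTwice (a b c : ℝ) : Prop :=
  (a = b ∧ a ≤ c) ∨ (a = c ∧ a ≤ b) ∨ (b = c ∧ b ≤ a)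

/-- `x` is a tropical Plücker vector of rank `d` on `[n]`: for every `S` of size `d-2`
and distinct `i,j,k,l ∉ S`, the minimum of the three pairwise sums is attained twice. -/
def TropPlucker (n d : ℕ) (x : Finset (Fin n) → ℝ) : Prop :=
  ∀ (S : Finset (Fin n)) (i j k l : Fin n),
    S.card = d - 2 → i ∉ S → j ∉ S → k ∉ S → l ∉ S →
    i ≠ j → i ≠ k → i ≠ l → j ≠ k → j ≠ l → k ≠ l →
    ThreeMinTwice
      (x (S ∪ {i, j}) + x (S ∪ {k, l}))
      (x (S ∪ {i, k}) + x (S ∪ {j, l}))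
      (x (S ∪ {i, l}) + x (S ∪ {j, k}))

/-- The linear functional on `ℝⁿ` with covector `a`. -/
def lin {n : ℕ} (a : Fin n → ℝ) (z : Fin n → ℝ) : ℝ := ∑ i, a i * z i

/-- `[u,v]` is an edge of the polytope with (finite) vertex set `V`: some linear
functional attains its maximum over `V` exactly at `u` and `v`, `u ≠ v`. -/
def IsEdge {n : ℕ} (V : Set (Fin n → ℝ)) (u v : Fin n → ℝ) : Prop :=
  u ∈ V ∧ v ∈ V ∧ u ≠ v ∧
  ∃ a : Fin n → ℝ, (∀ z ∈ V, lin a z ≤ lin a u) ∧ lin a u = lin a v ∧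
    ∀ z ∈ V, lin a z = lin a u → z = u ∨ z = v

/-- `[u,v]` is a 1-cell of the regular subdivision of the polytope with vertex set `V`
induced by the weights `w`: some affine functional `z ↦ lin a z + c` is dominated by `w`
on `V` and touches `w` exactly at `u` and `v`, `u ≠ v`. -/
def IsCellEdge {n : ℕ} (V : Set (Fin n → ℝ)) (w : (Fin n → ℝ) → ℝ)
    (u v : Fin n → ℝ) : Prop :=
  u ∈ V ∧ v ∈ V ∧ u ≠ v ∧
  ∃ (a : Fin n → ℝ) (c : ℝ), (∀ z ∈ V, lin a z + c ≤ w z) ∧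
    lin a u + c = w u ∧ lin a v + c = w v ∧
    ∀ z ∈ V, lin a z + c = w z → z = u ∨ z = v

/-- The vertex set of `Δ(p,q;n)`: all indicator vectors `e_K` with `|K| ∈ {p,q}`. -/
def DeltaVerts (n p q : ℕ) : Set (Fin n → ℝ) :=
  {v | ∃ K : Finset (Fin n), (K.card = p ∨ K.card = q) ∧ v = eInd K}

/-- The vertex set of the face `Δ_{S,T}`: the vectors `e_{S∪{i}}` and `e_{T∖{i}}`
for `i ∈ T∖S`. -/
def DeltaSTVerts {n : ℕ} (S T : Finset (Fin n)) : Set (Fin n → ℝ) :=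
  {v | ∃ i ∈ T \ S, v = eInd (insert i S) ∨ v = eInd (T.erase i)}

/-- The vertex set of the cross-polytope `P_n`: `{±e_i : i ∈ [n]}`. -/
def CrossVerts (n : ℕ) : Set (Fin n → ℝ) :=
  {v | ∃ i : Fin n, v = eInd {i} ∨ v = -(eInd {i})}

/-- `M'` is a quotient of `M` (the matroids are concordant):
every flat of `M'` is a flat of `M`. -/
def MatroidQuotient {α : Type*} (M' M : Matroid α) : Prop :=
  ∀ F : Set α, M'.IsFlat F → M.IsFlat F

section AuxST12

/-- basic exchange operation -/
def exch {n : ℕ} (A : Finset (Fin n)) (i j : Fin n) : Finset (Fin n) := insert j (A.erase i)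

lemma tmt_shift {a b c t : ℝ} (h : ThreeMinTwice a b c) :
    ThreeMinTwice (a - t) (b - t) (c - t) := by
  rcases h with ⟨h1, h2⟩ | ⟨h1, h2⟩ | ⟨h1, h2⟩
  · exact Or.inl ⟨by linarith, by linarith⟩
  · exact Or.inr (Or.inl ⟨by linarith, by linarith⟩)
  · exact Or.inr (Or.inr ⟨by linarith, by linarith⟩)

lemma mto_shift {α : Type*} [DecidableEq α] {s : Finset α} {f g : α → ℝ} {t : ℝ}
    (h : MinTwiceOn s f) (hg : ∀ i ∈ s, g i = f i - t) : MinTwiceOn s g := by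
  obtain ⟨a, ha, b, hb, hab, hfe, hmin⟩ := h
  exact ⟨a, ha, b, hb, hab, by rw [hg a ha, hg b hb, hfe],
    fun c hc => by rw [hg a ha, hg c hc]; linarith [hmin c hc]⟩

lemma sum_union_pair {n : ℕ} (a : Fin n → ℝ) {S : Finset (Fin n)} {i j : Fin n}
    (hi : i ∉ S) (hj : j ∉ S) (hij : i ≠ j) :
    ∑ t ∈ S ∪ {i, j}, a t = a i + a j + ∑ t ∈ S, a t := by
  have h1 : S ∪ {i, j} = insert i (insert j S) := by
    ext t; simp only [Finset.mem_union, Finset.mem_insert, Finset.mem_singleton]; tauto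
  rw [h1, Finset.sum_insert (by simp [hij, hi]), Finset.sum_insert hj]
  ring

lemma trop_shift {n d : ℕ} {x : Finset (Fin n) → ℝ} (a : Fin n → ℝ) (c : ℝ)
    (hx : TropPlucker n d x) :
    TropPlucker n d (fun K => x K - ∑ t ∈ K, a t - c) := by
  intro S i j k l hS hi hj hk hl hij hik hil hjk hjl hkl
  have h := hx S i j k l hS hi hj hk hl hij hik hil hjk hjl hkl
  have e1 := sum_union_pair a hi hj hij
  have e2 := sum_union_pair a hk hl hkl
  have e3 := sum_union_pair a hi hk hik
  have e4 := sum_union_pair a hj hl hjl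
  have e5 := sum_union_pair a hi hl hil
  have e6 := sum_union_pair a hj hk hjk
  have e0 : ∀ K : Finset (Fin n), (fun K => x K - ∑ t ∈ K, a t - c) K = x K - ∑ t ∈ K, a t - c := fun K => rfl
  unfold ThreeMinTwice at h ⊢
  simp only [e0, e1, e2, e3, e4, e5, e6]
  rcases h with ⟨h1, h2⟩ | ⟨h1, h2⟩ | ⟨h1, h2⟩
  · exact Or.inl ⟨by linarith, by linarith⟩
  · exact Or.inr (Or.inl ⟨by linarith, by linarith⟩)
  · exact Or.inr (Or.inr ⟨by linarith, by linarith⟩)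

lemma exch_card {n : ℕ} {A : Finset (Fin n)} {i j : Fin n} (hi : i ∈ A) (hj : j ∉ A) :
    (exch A i j).card = A.card := by
  unfold exch
  rw [Finset.card_insert_of_notMem (fun h => hj (Finset.mem_of_mem_erase h)),
    Finset.card_erase_of_mem hi]
  have : 1 ≤ A.card := Finset.card_pos.mpr ⟨i, hi⟩
  omega

lemma mem_exch {n : ℕ} {A : Finset (Fin n)} {i j t : Fin n} :
    t ∈ exch A i j ↔ t = j ∨ (t ∈ A ∧ t ≠ i) := by
  unfold exch
  simp only [Finset.mem_insert, Finset.mem_erase]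
  tauto

variable {n : ℕ} {A : Finset (Fin n)} {i0 i u v : Fin n}

lemma L1 (hi0A : i0 ∈ A) (hiA : i ∈ A) :
    ((A.erase i0).erase i) ∪ {i0, i} = A := by
  ext t
  simp only [Finset.mem_union, Finset.mem_insert, Finset.mem_singleton, Finset.mem_erase]
  by_cases h1 : t = i0 <;> by_cases h2 : t = i <;> subst_vars <;> simp_all <;> tauto

lemma L2 (hi0A : i0 ∈ A) (hiA : i ∈ A) (hi0i : i0 ≠ i) (hu : u ∉ A) :
    ((A.erase i0).erase i) ∪ {i0, u} = exch A i u := by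
  ext t
  simp only [Finset.mem_union, Finset.mem_insert, Finset.mem_singleton, Finset.mem_erase,
    mem_exch]
  by_cases h1 : t = i0 <;> by_cases h2 : t = i <;> by_cases h3 : t = u <;> subst_vars <;>
    simp_all <;> tauto

lemma L3 (hi0A : i0 ∈ A) (hiA : i ∈ A) (hi0i : i0 ≠ i) (hu : u ∉ A) :
    ((A.erase i0).erase i) ∪ {i, u} = exch A i0 u := by
  rw [Finset.erase_right_comm]
  exact L2 hiA hi0A hi0i.symm hu

lemma L4 (hi0A : i0 ∈ A) (hiA : i ∈ A) (hi0i : i0 ≠ i) (hu : u ∉ A) (hv : v ∉ A)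
    (huv : u ≠ v) :
    ((A.erase i0).erase i) ∪ {u, v} = exch (exch A i0 u) i v := by
  ext t
  simp only [Finset.mem_union, Finset.mem_insert, Finset.mem_singleton, Finset.mem_erase,
    mem_exch]
  by_cases h1 : t = i0 <;> by_cases h2 : t = i <;> by_cases h3 : t = u <;>
    by_cases h4 : t = v <;> subst_vars <;> simp_all <;> tauto


section genexch
lemma sdiff_card_le {n : ℕ} (A B : Finset (Fin n)) (h : A.card ≤ B.card) :
    (A \ B).card ≤ (B \ A).card := by
  have h1 := Finset.card_sdiff_add_card_inter A B
  have h2 := Finset.card_sdiff_add_card_inter B A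
  rw [Finset.inter_comm] at h2
  omega

lemma genExch {n p : ℕ} {x z : Finset (Fin n) → ℝ} (hx : TropPlucker n p x)
    {B : Finset (Fin n)}
    (base : ∀ A : Finset (Fin n), A.card = p → (A \ B).card = 1 → ∀ i ∈ A \ B,
      ∃ j ∈ B \ A, x (exch A i j) + z (exch B j i) ≤ x A + z B) :
    ∀ m (A : Finset (Fin n)), A.card = p → A.card ≤ B.card → (A \ B).card = m →
      ∀ i ∈ A \ B, ∃ j ∈ B \ A, ∃ j' ∈ B \ A,
        x (exch A i j) + z (exch B j' i) ≤ x A + z B := by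
  intro m
  induction m with
  | zero =>
    intro A _ _ hcard i hi
    rw [Finset.card_eq_zero] at hcard
    exact absurd (hcard ▸ hi) (Finset.notMem_empty i)
  | succ m IH =>
    intro A hA hle hcard i hi
    rcases Nat.eq_zero_or_pos m with hm | hm
    · subst hm
      obtain ⟨j, hj, hle2⟩ := base A hA hcard i hi
      exact ⟨j, hj, j, hj, hle2⟩
    · -- the inductive step
      have hiA : i ∈ A := (Finset.mem_sdiff.mp hi).1
      have hiB : i ∉ B := (Finset.mem_sdiff.mp hi).2
      have hne : ((A \ B).erase i).Nonempty := by
        rw [← Finset.card_pos, Finset.card_erase_of_mem hi, hcard]; omega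
      obtain ⟨i0, hi0e⟩ := hne
      have hi0i : i0 ≠ i := (Finset.mem_erase.mp hi0e).1
      have hi0 : i0 ∈ A \ B := (Finset.mem_erase.mp hi0e).2
      have hi0A : i0 ∈ A := (Finset.mem_sdiff.mp hi0).1
      have hi0B : i0 ∉ B := (Finset.mem_sdiff.mp hi0).2
      have hBAne : (B \ A).Nonempty := by
        rw [← Finset.card_pos]
        have := sdiff_card_le A B hle
        omega
      obtain ⟨j0, hj0, hj0min⟩ := Finset.exists_min_image (B \ A) (fun j => x (exch A i0 j)) hBAne
      have hj0B : j0 ∈ B := (Finset.mem_sdiff.mp hj0).1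
      have hj0A : j0 ∉ A := (Finset.mem_sdiff.mp hj0).2
      have hA'card : (exch A i0 j0).card = p := by rw [exch_card hi0A hj0A, hA]
      have hA'B : (exch A i0 j0) \ B = (A \ B).erase i0 := by
        ext t
        simp only [Finset.mem_sdiff, Finset.mem_erase, mem_exch]
        constructor
        · rintro ⟨h1 | ⟨h1, h2⟩, h3⟩
          · exact absurd (h1 ▸ hj0B) h3
          · exact ⟨h2, h1, h3⟩
        · rintro ⟨h1, h2, h3⟩
          exact ⟨Or.inr ⟨h2, h1⟩, h3⟩
      have hBA' : B \ (exch A i0 j0) = (B \ A).erase j0 := by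
        ext t
        simp only [Finset.mem_sdiff, Finset.mem_erase, mem_exch]
        constructor
        · rintro ⟨h1, h2⟩
          push_neg at h2
          exact ⟨h2.1, h1, fun hta => (h2.2 hta) ▸ hi0B <| h1⟩
        · rintro ⟨h1, h2, h3⟩
          refine ⟨h2, ?_⟩
          push_neg
          exact ⟨h1, fun hta => (h3 hta).elim⟩
      have hA'Bcard : ((exch A i0 j0) \ B).card = m := by
        rw [hA'B, Finset.card_erase_of_mem hi0, hcard]; omega
      have hiA' : i ∈ (exch A i0 j0) \ B := by
        rw [hA'B, Finset.mem_erase]; exact ⟨fun h => hi0i h.symm, hi⟩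
      obtain ⟨j, hj, j', hj', key⟩ :=
        IH (exch A i0 j0) hA'card (by rw [hA'card, ← hA]; exact hle) hA'Bcard i hiA'
      rw [hBA'] at hj hj'
      have hjj0 : j ≠ j0 := (Finset.mem_erase.mp hj).1
      have hjBA : j ∈ B \ A := (Finset.mem_erase.mp hj).2
      have hj'BA : j' ∈ B \ A := (Finset.mem_erase.mp hj').2
      have hjB : j ∈ B := (Finset.mem_sdiff.mp hjBA).1
      have hjA : j ∉ A := (Finset.mem_sdiff.mp hjBA).2
      have hp2 : 2 ≤ p := by
        have h1 : (A \ B).card ≤ A.card := Finset.card_le_card Finset.sdiff_subset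
        omega
      have hScard : ((A.erase i0).erase i).card = p - 2 := by
        rw [Finset.card_erase_of_mem (Finset.mem_erase.mpr ⟨fun h => hi0i h.symm, hiA⟩),
          Finset.card_erase_of_mem hi0A, hA]; omega
      have hSsub : ((A.erase i0).erase i) ⊆ A :=
        fun t ht => Finset.mem_of_mem_erase (Finset.mem_of_mem_erase ht)
      have hi0S : i0 ∉ ((A.erase i0).erase i) :=
        fun h => (Finset.mem_erase.mp (Finset.mem_of_mem_erase h)).1 rfl
      have hiS : i ∉ ((A.erase i0).erase i) := fun h => (Finset.mem_erase.mp h).1 rfl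
      have hj0S : j0 ∉ ((A.erase i0).erase i) := fun h => hj0A (hSsub h)
      have hjS : j ∉ ((A.erase i0).erase i) := fun h => hjA (hSsub h)
      have hij : i ≠ j := fun h => hjA (h ▸ hiA)
      have hi0j0 : i0 ≠ j0 := fun h => hj0A (h ▸ hi0A)
      have hi0j : i0 ≠ j := fun h => hjA (h ▸ hi0A)
      have hij0 : i ≠ j0 := fun h => hj0A (h ▸ hiA)
      have htrop := hx ((A.erase i0).erase i) i0 i j0 j hScard hi0S hiS hj0S hjS
        hi0i hi0j0 hi0j hij0 hij hjj0.symm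
      rw [L1 hi0A hiA, L4 hi0A hiA hi0i hj0A hjA (fun h => hjj0 h.symm),
        L2 hi0A hiA hi0i hj0A, L3 hi0A hiA hi0i hjA,
        L2 hi0A hiA hi0i hjA, L3 hi0A hiA hi0i hj0A] at htrop
      have hmin : x (exch A i0 j0) ≤ x (exch A i0 j) := hj0min j hjBA
      rcases htrop with ⟨h1, h2⟩ | ⟨h1, h2⟩ | ⟨h1, h2⟩
      · exact ⟨j0, hj0, j', hj'BA, by linarith⟩
      · exact ⟨j, hjBA, j', hj'BA, by linarith⟩
      · exact ⟨j, hjBA, j', hj'BA, by linarith⟩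
end genexch

lemma exch_eq_of_singles {n : ℕ} {A B : Finset (Fin n)} {i j : Fin n}
    (hAB : A \ B = {i}) (hBA : B \ A = {j}) : exch A i j = B := by
  have hi : i ∈ A \ B := by rw [hAB]; exact Finset.mem_singleton_self i
  have hj : j ∈ B \ A := by rw [hBA]; exact Finset.mem_singleton_self j
  have hiA : i ∈ A := (Finset.mem_sdiff.mp hi).1
  have hiB : i ∉ B := (Finset.mem_sdiff.mp hi).2
  have hjB : j ∈ B := (Finset.mem_sdiff.mp hj).1
  have hjA : j ∉ A := (Finset.mem_sdiff.mp hj).2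
  ext t
  rw [mem_exch]
  constructor
  · rintro (h | ⟨h1, h2⟩)
    · exact h ▸ hjB
    · by_contra h3
      have : t ∈ A \ B := Finset.mem_sdiff.mpr ⟨h1, h3⟩
      rw [hAB, Finset.mem_singleton] at this
      exact h2 this
  · intro htB
    by_cases h1 : t ∈ A
    · exact Or.inr ⟨h1, fun h => hiB (h ▸ htB)⟩
    · left
      have : t ∈ B \ A := Finset.mem_sdiff.mpr ⟨htB, h1⟩
      rw [hBA, Finset.mem_singleton] at this
      exact this

lemma pure_base {n p : ℕ} {x : Finset (Fin n) → ℝ} {B : Finset (Fin n)} (hB : B.card = p) :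
    ∀ A : Finset (Fin n), A.card = p → (A \ B).card = 1 → ∀ i ∈ A \ B,
      ∃ j ∈ B \ A, x (exch A i j) + x (exch B j i) ≤ x A + x B := by
  intro A hA hcard i hi
  obtain ⟨a, ha⟩ := Finset.card_eq_one.mp hcard
  have hia : i = a := by rw [ha, Finset.mem_singleton] at hi; exact hi
  subst hia
  have hBA1 : (B \ A).card = 1 := by
    have h1 := Finset.card_sdiff_add_card_inter A B
    have h2 := Finset.card_sdiff_add_card_inter B A
    rw [Finset.inter_comm] at h2
    omega
  obtain ⟨b, hb⟩ := Finset.card_eq_one.mp hBA1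
  have e1 : exch A i b = B := exch_eq_of_singles ha hb
  have e2 : exch B b i = A := exch_eq_of_singles hb ha
  refine ⟨b, by rw [hb]; exact Finset.mem_singleton_self b, ?_⟩
  rw [e1, e2]
  linarith

lemma mixed_base {n p q : ℕ} {x y : Finset (Fin n) → ℝ}
    (hinc : ∀ S T : Finset (Fin n), S ⊆ T → S.card = p - 1 → T.card = q + 1 →
      MinTwiceOn (T \ S) (fun i => x (insert i S) + y (T.erase i)))
    {B : Finset (Fin n)} (hB : B.card = q) :
    ∀ A : Finset (Fin n), A.card = p → (A \ B).card = 1 → ∀ i ∈ A \ B,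
      ∃ j ∈ B \ A, x (exch A i j) + y (exch B j i) ≤ x A + y B := by
  intro A hA hcard i hi
  obtain ⟨a, ha⟩ := Finset.card_eq_one.mp hcard
  have hia : i = a := by rw [ha, Finset.mem_singleton] at hi; exact hi
  subst hia
  have hiA : i ∈ A := (Finset.mem_sdiff.mp hi).1
  have hiB : i ∉ B := (Finset.mem_sdiff.mp hi).2
  have hST : A.erase i ⊆ insert i B := by
    intro t ht
    have h1 : t ∈ A := Finset.mem_of_mem_erase ht
    have h2 : t ≠ i := (Finset.mem_erase.mp ht).1
    by_cases h3 : t ∈ B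
    · exact Finset.mem_insert_of_mem h3
    · exfalso
      have h4 : t ∈ A \ B := Finset.mem_sdiff.mpr ⟨h1, h3⟩
      rw [ha, Finset.mem_singleton] at h4
      exact h2 h4
  have hScard : (A.erase i).card = p - 1 := by rw [Finset.card_erase_of_mem hiA, hA]
  have hTcard : (insert i B).card = q + 1 := by rw [Finset.card_insert_of_notMem hiB, hB]
  have mt := hinc (A.erase i) (insert i B) hST hScard hTcard
  obtain ⟨a', ha', b', hb', hab, heq, hmin⟩ := mt
  have hiTS : i ∈ (insert i B) \ (A.erase i) := by
    rw [Finset.mem_sdiff]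
    exact ⟨Finset.mem_insert_self i B, fun h => (Finset.mem_erase.mp h).1 rfl⟩
  set t := if a' = i then b' else a' with htdef
  have hti : t ≠ i := by
    rw [htdef]; split
    · rename_i h; exact fun hh => hab (hh ▸ h ▸ rfl)
    · rename_i h; exact h
  have htTS : t ∈ (insert i B) \ (A.erase i) := by rw [htdef]; split <;> assumption
  have h1 : x (insert a' (A.erase i)) + y ((insert i B).erase a')
      ≤ x (insert i (A.erase i)) + y ((insert i B).erase i) := hmin i hiTS
  have heq' : x (insert a' (A.erase i)) + y ((insert i B).erase a')
      = x (insert b' (A.erase i)) + y ((insert i B).erase b') := heq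
  have hft : x (insert t (A.erase i)) + y ((insert i B).erase t)
      ≤ x (insert i (A.erase i)) + y ((insert i B).erase i) := by
    rw [htdef]; split <;> linarith
  have htB : t ∈ B := by
    have := (Finset.mem_sdiff.mp htTS).1
    rcases Finset.mem_insert.mp this with h | h
    · exact absurd h hti
    · exact h
  have htA : t ∉ A := by
    intro h
    exact (Finset.mem_sdiff.mp htTS).2 (Finset.mem_erase.mpr ⟨hti, h⟩)
  refine ⟨t, Finset.mem_sdiff.mpr ⟨htB, htA⟩, ?_⟩
  have r1 : insert i (A.erase i) = A := Finset.insert_erase hiA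
  have r2 : (insert i B).erase i = B := Finset.erase_insert hiB
  have r3 : (insert i B).erase t = exch B t i := by
    rw [Finset.erase_insert_of_ne hti.symm]; rfl
  have r4 : insert t (A.erase i) = exch A i t := rfl
  rw [r1, r2, r3, r4] at hft
  exact hft

lemma no_third_same {n d : ℕ} {x : Finset (Fin n) → ℝ} (hx : TropPlucker n d x)
    {A B : Finset (Fin n)} (hA : A.card = d) (hB : B.card = d)
    (hAB2 : 2 ≤ (A \ B).card)
    (hpos : ∀ K : Finset (Fin n), K.card = d → 0 ≤ x K)
    (hxA : x A = 0) (hxB : x B = 0) :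
    ∃ C : Finset (Fin n), C.card = d ∧ x C = 0 ∧ C ≠ A ∧ C ≠ B := by
  have hne : (A \ B).Nonempty := Finset.card_pos.mp (by omega)
  obtain ⟨i, hi⟩ := hne
  obtain ⟨j, hj, j', hj', hle⟩ := genExch hx (pure_base hB) (A \ B).card A hA
    (by omega) rfl i hi
  have hiA : i ∈ A := (Finset.mem_sdiff.mp hi).1
  have hiB : i ∉ B := (Finset.mem_sdiff.mp hi).2
  have hjB : j ∈ B := (Finset.mem_sdiff.mp hj).1
  have hjA : j ∉ A := (Finset.mem_sdiff.mp hj).2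
  have hj'B : j' ∈ B := (Finset.mem_sdiff.mp hj').1
  have hj'A : j' ∉ A := (Finset.mem_sdiff.mp hj').2
  have hc1 : (exch A i j).card = d := by rw [exch_card hiA hjA, hA]
  have hc2 : (exch B j' i).card = d := by rw [exch_card hj'B hiB, hB]
  have hp1 := hpos _ hc1
  have hp2 := hpos _ hc2
  have hz : x (exch A i j) = 0 := by linarith
  refine ⟨exch A i j, hc1, hz, ?_, ?_⟩
  · intro h
    have hm : i ∈ exch A i j := by rw [h]; exact hiA
    rw [mem_exch] at hm
    rcases hm with h1 | ⟨_, h2⟩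
    · exact hjA (h1 ▸ hiA)
    · exact h2 rfl
  · intro h
    have h2 : ((A \ B).erase i).Nonempty := by
      rw [← Finset.card_pos, Finset.card_erase_of_mem hi]; omega
    obtain ⟨i2, hi2⟩ := h2
    have hi2i : i2 ≠ i := (Finset.mem_erase.mp hi2).1
    have hi2AB := (Finset.mem_erase.mp hi2).2
    have hi2A : i2 ∈ A := (Finset.mem_sdiff.mp hi2AB).1
    have hi2B : i2 ∉ B := (Finset.mem_sdiff.mp hi2AB).2
    have : i2 ∈ exch A i j := mem_exch.mpr (Or.inr ⟨hi2A, hi2i⟩)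
    exact hi2B (h ▸ this)

lemma no_third_mixed {n p q : ℕ} (hpq : p ≤ q) {x y : Finset (Fin n) → ℝ}
    (hx : TropPlucker n p x)
    (hinc : ∀ S T : Finset (Fin n), S ⊆ T → S.card = p - 1 → T.card = q + 1 →
      MinTwiceOn (T \ S) (fun i => x (insert i S) + y (T.erase i)))
    {A B : Finset (Fin n)} (hA : A.card = p) (hB : B.card = q)
    (hAB1 : ¬ A ⊆ B)
    (hxpos : ∀ K : Finset (Fin n), K.card = p → 0 ≤ x K)
    (hypos : ∀ K : Finset (Fin n), K.card = q → 0 ≤ y K)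
    (hxA : x A = 0) (hyB : y B = 0) :
    ∃ C : Finset (Fin n), C.card = p ∧ x C = 0 ∧ C ≠ A := by
  have hne : (A \ B).Nonempty := by
    rw [Finset.sdiff_nonempty]; exact hAB1
  obtain ⟨i, hi⟩ := hne
  obtain ⟨j, hj, j', hj', hle⟩ := genExch hx (mixed_base hinc hB) (A \ B).card A hA
    (by omega) rfl i hi
  have hiA : i ∈ A := (Finset.mem_sdiff.mp hi).1
  have hiB : i ∉ B := (Finset.mem_sdiff.mp hi).2
  have hjA : j ∉ A := (Finset.mem_sdiff.mp hj).2
  have hj'B : j' ∈ B := (Finset.mem_sdiff.mp hj').1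
  have hc1 : (exch A i j).card = p := by rw [exch_card hiA hjA, hA]
  have hc2 : (exch B j' i).card = q := by rw [exch_card hj'B hiB, hB]
  have hp1 := hxpos _ hc1
  have hp2 := hypos _ hc2
  have hz : x (exch A i j) = 0 := by linarith
  refine ⟨exch A i j, hc1, hz, ?_⟩
  intro h
  have hm : i ∈ exch A i j := by rw [h]; exact hiA
  rw [mem_exch] at hm
  rcases hm with h1 | ⟨_, h2⟩
  · exact hjA (h1 ▸ hiA)
  · exact h2 rfl

lemma eInd_inj {n : ℕ} {K L : Finset (Fin n)} (h : eInd K = eInd L) : K = L := by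
  ext t
  have := congrFun h t
  simp only [eInd] at this
  by_cases h1 : t ∈ K <;> by_cases h2 : t ∈ L <;> simp_all

lemma lin_eInd {n : ℕ} (a : Fin n → ℝ) (K : Finset (Fin n)) :
    lin a (eInd K) = ∑ t ∈ K, a t := by
  unfold lin eInd
  simp only [mul_ite, mul_one, mul_zero]
  rw [Finset.sum_ite_mem, Finset.univ_inter]

lemma sum_three_split {n : ℕ} (A B K : Finset (Fin n)) (hAB : A ⊆ B) (c1 c2 c3 : ℝ) :
    ∑ t ∈ K, (if t ∈ A then c1 else if t ∈ B then c2 else c3)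
      = c1 * (K ∩ A).card + c2 * ((K ∩ B) \ A).card + c3 * (K \ B).card := by
  rw [← Finset.sum_filter_add_sum_filter_not K (· ∈ B)]
  rw [← Finset.sum_filter_add_sum_filter_not (K.filter (· ∈ B)) (· ∈ A)]
  have e1 : (K.filter (· ∈ B)).filter (· ∈ A) = K ∩ A := by
    ext t
    simp only [Finset.mem_filter, Finset.mem_inter]
    constructor
    · rintro ⟨⟨h1, _⟩, h3⟩; exact ⟨h1, h3⟩
    · rintro ⟨h1, h2⟩; exact ⟨⟨h1, hAB h2⟩, h2⟩
  have e2 : (K.filter (· ∈ B)).filter (¬ · ∈ A) = (K ∩ B) \ A := by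
    ext t
    simp only [Finset.mem_filter, Finset.mem_inter, Finset.mem_sdiff]
    try tauto
  have e3 : K.filter (¬ · ∈ B) = K \ B := by
    ext t
    simp only [Finset.mem_filter, Finset.mem_sdiff]
  rw [e1, e2, e3]
  have s1 : ∑ t ∈ K ∩ A, (if t ∈ A then c1 else if t ∈ B then c2 else c3) = c1 * (K ∩ A).card := by
    rw [Finset.sum_congr rfl (fun t ht => ?_), Finset.sum_const, nsmul_eq_mul, mul_comm]
    simp [Finset.mem_inter.mp ht |>.2]
  have s2 : ∑ t ∈ (K ∩ B) \ A, (if t ∈ A then c1 else if t ∈ B then c2 else c3)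
      = c2 * ((K ∩ B) \ A).card := by
    rw [Finset.sum_congr rfl (fun t ht => ?_), Finset.sum_const, nsmul_eq_mul, mul_comm]
    have := Finset.mem_sdiff.mp ht
    simp [this.2, (Finset.mem_inter.mp this.1).2]
  have s3 : ∑ t ∈ K \ B, (if t ∈ A then c1 else if t ∈ B then c2 else c3) = c3 * (K \ B).card := by
    rw [Finset.sum_congr rfl (fun t ht => ?_), Finset.sum_const, nsmul_eq_mul, mul_comm]
    have h2 := Finset.mem_sdiff.mp ht
    have hA : t ∉ A := fun h => h2.2 (hAB h)
    simp [hA, h2.2]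
  rw [s1, s2, s3]

lemma eInd_ne {n : ℕ} {K L : Finset (Fin n)} (h : K ≠ L) : eInd K ≠ eInd L :=
  fun hh => h (eInd_inj hh)

/-- helper: if S ⊆ K ⊆ insert i (insert j S) and |K| = |S| + 1 then K is one of the two. -/
lemma K_cases {n : ℕ} {S K : Finset (Fin n)} {i j : Fin n}
    (hSK : S ⊆ K) (hKU : K ⊆ insert i (insert j S)) (hcard : K.card = S.card + 1) :
    K = insert i S ∨ K = insert j S := by
  have hKS : K ∩ S = S := Finset.inter_eq_right.mpr hSK
  have h1 : (K ∩ S).card + (K \ S).card = K.card := Finset.card_inter_add_card_sdiff K S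
  rw [hKS] at h1
  have h2 : (K \ S).card = 1 := by omega
  obtain ⟨c, hc⟩ := Finset.card_eq_one.mp h2
  have hcK : c ∈ K := by
    have : c ∈ K \ S := by rw [hc]; exact Finset.mem_singleton_self c
    exact (Finset.mem_sdiff.mp this).1
  have hcS : c ∉ S := by
    have : c ∈ K \ S := by rw [hc]; exact Finset.mem_singleton_self c
    exact (Finset.mem_sdiff.mp this).2
  have hKeq : K = insert c S := by
    ext t
    rw [Finset.mem_insert]
    constructor
    · intro ht
      by_cases hts : t ∈ S
      · exact Or.inr hts
      · left
        have : t ∈ K \ S := Finset.mem_sdiff.mpr ⟨ht, hts⟩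
        rw [hc, Finset.mem_singleton] at this
        exact this
    · rintro (h | h)
      · exact h ▸ hcK
      · exact hSK h
  have hcU : c ∈ insert i (insert j S) := hKU hcK
  rcases Finset.mem_insert.mp hcU with h | h
  · exact Or.inl (by rw [hKeq, h])
  · rcases Finset.mem_insert.mp h with h' | h'
    · exact Or.inr (by rw [hKeq, h'])
    · exact absurd h' hcS

lemma edge2 {n p q : ℕ} (hpq : p < q) {A B : Finset (Fin n)}
    (hA : A.card = p) (hB : B.card = q) (hsub : A ⊆ B) :
    IsEdge (DeltaVerts n p q) (eInd A) (eInd B) := by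
  have hABne : A ≠ B := fun h => by rw [h] at hA; omega
  refine ⟨⟨A, Or.inl hA, rfl⟩, ⟨B, Or.inr hB, rfl⟩, eInd_ne hABne, ?_⟩
  set a : Fin n → ℝ := fun t => if t ∈ A then 1 else if t ∈ B then 0 else -1 with hadef
  have hval : ∀ K : Finset (Fin n),
      lin a (eInd K) = (K ∩ A).card - (K \ B).card := by
    intro K
    rw [lin_eInd, hadef, sum_three_split A B K hsub 1 0 (-1)]
    ring
  have hvA : lin a (eInd A) = p := by
    rw [hval]
    rw [Finset.inter_self, Finset.sdiff_eq_empty_iff_subset.mpr hsub, hA]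
    simp
  have hvB : lin a (eInd B) = p := by
    rw [hval]
    rw [Finset.inter_eq_right.mpr hsub, Finset.sdiff_self, hA]
    simp
  have hkey : ∀ K : Finset (Fin n), (K.card = p ∨ K.card = q) →
      lin a (eInd K) ≤ p ∧ (lin a (eInd K) = p → K = A ∨ K = B) := by
    intro K hK
    have hsle : (K ∩ A).card ≤ p := by
      rw [← hA]; exact Finset.card_le_card Finset.inter_subset_right
    constructor
    · rw [hval]
      have h1 : ((K ∩ A).card : ℝ) ≤ p := by exact_mod_cast hsle
      have h2 : (0:ℝ) ≤ ((K \ B).card : ℕ) := by positivity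
      linarith
    · intro heq
      rw [hval] at heq
      have h1 : ((K ∩ A).card : ℝ) ≤ p := by exact_mod_cast hsle
      have h2 : (0:ℝ) ≤ ((K \ B).card : ℕ) := by positivity
      have hs : ((K ∩ A).card : ℝ) = p := by linarith
      have hu : ((K \ B).card : ℝ) = 0 := by linarith
      have hs' : (K ∩ A).card = p := by exact_mod_cast hs
      have hu' : (K \ B).card = 0 := by exact_mod_cast hu
      have hAK : A ⊆ K := by
        have h3 : K ∩ A ⊆ A := Finset.inter_subset_right
        have h4 : A.card ≤ (K ∩ A).card := by omega
        have h5 := Finset.eq_of_subset_of_card_le h3 h4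
        intro t ht
        have h6 : t ∈ K ∩ A := by rw [h5]; exact ht
        exact (Finset.mem_inter.mp h6).1
      have hKB : K ⊆ B := Finset.sdiff_eq_empty_iff_subset.mp (Finset.card_eq_zero.mp hu')
      rcases hK with hk | hk
      · left
        exact (Finset.eq_of_subset_of_card_le hAK (by omega)).symm
      · right
        exact Finset.eq_of_subset_of_card_le hKB (by omega)
  refine ⟨a, ?_, by rw [hvA, hvB], ?_⟩
  · rintro z ⟨K, hK, rfl⟩
    rw [hvA]
    exact (hkey K hK).1
  · rintro z ⟨K, hK, rfl⟩ heq
    rw [hvA] at heq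
    rcases (hkey K hK).2 heq with h | h
    · exact Or.inl (by rw [h])
    · exact Or.inr (by rw [h])

lemma edge1 {n p q : ℕ} (hp : 1 ≤ p) (hpq : p ≤ q) {A B : Finset (Fin n)}
    (hApq : A.card = p ∨ A.card = q) (hBA : B.card = A.card) (hAB : A ≠ B)
    (h1 : (A \ B).card = 1) : IsEdge (DeltaVerts n p q) (eInd A) (eInd B) := by
  have hBA1 : (B \ A).card = 1 := by
    have e1 := Finset.card_sdiff_add_card_inter A B
    have e2 := Finset.card_sdiff_add_card_inter B A
    rw [Finset.inter_comm] at e2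
    omega
  obtain ⟨i, hi⟩ := Finset.card_eq_one.mp h1
  obtain ⟨j, hj⟩ := Finset.card_eq_one.mp hBA1
  have hiA : i ∈ A := by
    have : i ∈ A \ B := by rw [hi]; exact Finset.mem_singleton_self i
    exact (Finset.mem_sdiff.mp this).1
  have hiB : i ∉ B := by
    have : i ∈ A \ B := by rw [hi]; exact Finset.mem_singleton_self i
    exact (Finset.mem_sdiff.mp this).2
  have hjB : j ∈ B := by
    have : j ∈ B \ A := by rw [hj]; exact Finset.mem_singleton_self j
    exact (Finset.mem_sdiff.mp this).1
  have hjA : j ∉ A := by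
    have : j ∈ B \ A := by rw [hj]; exact Finset.mem_singleton_self j
    exact (Finset.mem_sdiff.mp this).2
  have hij : i ≠ j := fun h => hjA (h ▸ hiA)
  set S := A ∩ B with hSdef
  have hSA : S ⊆ A := Finset.inter_subset_left
  have hSB : S ⊆ B := Finset.inter_subset_right
  have hiS : i ∉ S := fun h => hiB (hSB h)
  have hjS : j ∉ S := fun h => hjA (hSA h)
  have hAS : A = insert i S := by
    ext t
    rw [Finset.mem_insert]
    constructor
    · intro ht
      by_cases htB : t ∈ B
      · exact Or.inr (Finset.mem_inter.mpr ⟨ht, htB⟩)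
      · left
        have : t ∈ A \ B := Finset.mem_sdiff.mpr ⟨ht, htB⟩
        rw [hi, Finset.mem_singleton] at this
        exact this
    · rintro (h | h)
      · exact h ▸ hiA
      · exact hSA h
  have hBS : B = insert j S := by
    ext t
    rw [Finset.mem_insert]
    constructor
    · intro ht
      by_cases htA : t ∈ A
      · exact Or.inr (Finset.mem_inter.mpr ⟨htA, ht⟩)
      · left
        have : t ∈ B \ A := Finset.mem_sdiff.mpr ⟨ht, htA⟩
        rw [hj, Finset.mem_singleton] at this
        exact this
    · rintro (h | h)
      · exact h ▸ hjB
      · exact hSB h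
  have hSd : S.card + 1 = A.card := by
    rw [hAS, Finset.card_insert_of_notMem hiS]
  set U := insert i (insert j S) with hUdef
  have hSU : S ⊆ U := fun t ht => Finset.mem_insert_of_mem (Finset.mem_insert_of_mem ht)
  have hAU : A ⊆ U := by
    rw [hAS]; exact Finset.insert_subset_insert i (fun t ht => Finset.mem_insert_of_mem ht)
  have hBU : B ⊆ U := by
    rw [hBS]
    intro t ht
    rcases Finset.mem_insert.mp ht with h | h
    · exact Finset.mem_insert_of_mem (h ▸ Finset.mem_insert_self j S)
    · exact hSU h
  -- decomposition facts for arbitrary K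
  have hfacts : ∀ K : Finset (Fin n),
      (K ∩ S).card + ((K ∩ U) \ S).card + (K \ U).card = K.card ∧
      (K ∩ S).card ≤ S.card ∧ ((K ∩ U) \ S).card ≤ 2 := by
    intro K
    have e2 : (K ∩ U).card + (K \ U).card = K.card := Finset.card_inter_add_card_sdiff K U
    have e3 : (K ∩ U) ∩ S = K ∩ S := by
      ext t
      simp only [Finset.mem_inter]
      exact ⟨fun h => ⟨h.1.1, h.2⟩, fun h => ⟨⟨h.1, hSU h.2⟩, h.2⟩⟩
    have e1 : ((K ∩ U) ∩ S).card + ((K ∩ U) \ S).card = (K ∩ U).card :=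
      Finset.card_inter_add_card_sdiff (K ∩ U) S
    rw [e3] at e1
    have e4 : (K ∩ U) \ S ⊆ {i, j} := by
      intro t ht
      have h1 := Finset.mem_sdiff.mp ht
      have h2 := (Finset.mem_inter.mp h1.1).2
      rw [hUdef] at h2
      rcases Finset.mem_insert.mp h2 with h | h
      · exact Finset.mem_insert.mpr (Or.inl h)
      · rcases Finset.mem_insert.mp h with h' | h'
        · exact Finset.mem_insert.mpr (Or.inr (Finset.mem_singleton.mpr h'))
        · exact absurd h' h1.2
    have e5 : ((K ∩ U) \ S).card ≤ 2 := by
      calc ((K ∩ U) \ S).card ≤ ({i, j} : Finset (Fin n)).card := Finset.card_le_card e4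
        _ ≤ 2 := by
          rw [Finset.card_pair hij]
    refine ⟨by omega, ?_, e5⟩
    exact Finset.card_le_card Finset.inter_subset_right
  -- critical case gives K = A or K = B
  have hKAB : ∀ K : Finset (Fin n), (K ∩ S).card = S.card → (K \ U).card = 0 →
      K.card = S.card + 1 → K = A ∨ K = B := by
    intro K hs hu hc
    have hSK : S ⊆ K := by
      have h3 : K ∩ S ⊆ S := Finset.inter_subset_right
      have h5 := Finset.eq_of_subset_of_card_le h3 (by omega)
      intro t ht
      have h6 : t ∈ K ∩ S := by rw [h5]; exact ht
      exact (Finset.mem_inter.mp h6).1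
    have hKU : K ⊆ U := Finset.sdiff_eq_empty_iff_subset.mp (Finset.card_eq_zero.mp hu)
    rcases K_cases hSK hKU hc with h | h
    · exact Or.inl (by rw [h, hAS])
    · exact Or.inr (by rw [h, hBS])
  -- value of A and B for arbitrary coefficients
  have hAvals : ∀ c1 c2 : ℝ, (A ∩ S).card = S.card ∧ ((A ∩ U) \ S).card = 1 ∧
      (A \ U).card = 0 ∧ (B ∩ S).card = S.card ∧ ((B ∩ U) \ S).card = 1 ∧
      (B \ U).card = 0 := by
    intro _ _
    have hAiS : A ∩ S = S := Finset.inter_eq_right.mpr hSA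
    have hBiS : B ∩ S = S := Finset.inter_eq_right.mpr hSB
    have hAiU : A ∩ U = A := Finset.inter_eq_left.mpr hAU
    have hBiU : B ∩ U = B := Finset.inter_eq_left.mpr hBU
    have hAsd : A \ S = {i} := by
      rw [hAS]
      ext t
      simp only [Finset.mem_sdiff, Finset.mem_insert, Finset.mem_singleton]
      constructor
      · rintro ⟨h | h, h2⟩
        · exact h
        · exact absurd h h2
      · rintro rfl
        exact ⟨Or.inl rfl, hiS⟩
    have hBsd : B \ S = {j} := by
      rw [hBS]
      ext t
      simp only [Finset.mem_sdiff, Finset.mem_insert, Finset.mem_singleton]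
      constructor
      · rintro ⟨h | h, h2⟩
        · exact h
        · exact absurd h h2
      · rintro rfl
        exact ⟨Or.inl rfl, hjS⟩
    refine ⟨by rw [hAiS], ?_, ?_, by rw [hBiS], ?_, ?_⟩
    · rw [hAiU, hAsd, Finset.card_singleton]
    · rw [Finset.card_eq_zero, Finset.sdiff_eq_empty_iff_subset]; exact hAU
    · rw [hBiU, hBsd, Finset.card_singleton]
    · rw [Finset.card_eq_zero, Finset.sdiff_eq_empty_iff_subset]; exact hBU
  obtain ⟨fA1, fA2, fA3, fB1, fB2, fB3⟩ := hAvals 0 0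
  have hABne : eInd A ≠ eInd B := eInd_ne hAB
  have hmemA : eInd A ∈ DeltaVerts n p q := ⟨A, hApq, rfl⟩
  have hmemB : eInd B ∈ DeltaVerts n p q := ⟨B, by rw [hBA]; exact hApq, rfl⟩
  rcases hApq with hd | hd
  · -- A.card = p case; use weights 0 on S, -1/2 on {i,j}, -1 outside
    set a : Fin n → ℝ := fun t => if t ∈ S then 0 else if t ∈ U then -(1/2) else -1 with hadef
    have hval : ∀ K : Finset (Fin n), lin a (eInd K) =
        0 * (K ∩ S).card + (-(1/2)) * ((K ∩ U) \ S).card + (-1) * (K \ U).card := by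
      intro K
      rw [lin_eInd, hadef, sum_three_split S U K hSU 0 (-(1/2)) (-1)]
    have hvA : lin a (eInd A) = -(1/2) := by
      rw [hval, fA1, fA2, fA3]; norm_num
    have hvB : lin a (eInd B) = -(1/2) := by
      rw [hval, fB1, fB2, fB3]; norm_num
    have hkey : ∀ K : Finset (Fin n), (K.card = p ∨ K.card = q) →
        lin a (eInd K) ≤ -(1/2) ∧ (lin a (eInd K) = -(1/2) → K = A ∨ K = B) := by
      intro K hK
      obtain ⟨hsum, hs, ht2⟩ := hfacts K
      by_cases hcrit : (K ∩ S).card = S.card ∧ ((K ∩ U) \ S).card = 1 ∧ (K \ U).card = 0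
      · obtain ⟨c1, c2, c3⟩ := hcrit
        constructor
        · rw [hval, c1, c2, c3]; norm_num
        · intro _
          exact hKAB K c1 c3 (by omega)
      · have hstrict : 1 < ((K ∩ U) \ S).card + 2 * (K \ U).card := by omega
        have hr : lin a (eInd K) < -(1/2) := by
          rw [hval]
          have r1 : (1:ℝ) < ((K ∩ U) \ S).card + 2 * (K \ U).card := by exact_mod_cast hstrict
          have r2 : (0:ℝ) ≤ ((K ∩ S).card : ℕ) := by exact Nat.cast_nonneg _
          push_cast
          push_cast at r1
          linarith
        exact ⟨le_of_lt hr, fun h => absurd h (ne_of_lt hr)⟩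
    refine ⟨hmemA, hmemB, hABne, a, ?_, by rw [hvA, hvB], ?_⟩
    · rintro z ⟨K, hK, rfl⟩
      rw [hvA]; exact (hkey K hK).1
    · rintro z ⟨K, hK, rfl⟩ heq
      rw [hvA] at heq
      rcases (hkey K hK).2 heq with h | h
      · exact Or.inl (by rw [h])
      · exact Or.inr (by rw [h])
  · -- A.card = q case; use weights 1 on S, 1/2 on {i,j}, -1 outside
    set a : Fin n → ℝ := fun t => if t ∈ S then 1 else if t ∈ U then 1/2 else -1 with hadef
    have hval : ∀ K : Finset (Fin n), lin a (eInd K) =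
        1 * (K ∩ S).card + (1/2) * ((K ∩ U) \ S).card + (-1) * (K \ U).card := by
      intro K
      rw [lin_eInd, hadef, sum_three_split S U K hSU 1 (1/2) (-1)]
    have hvA : lin a (eInd A) = S.card + 1/2 := by
      rw [hval, fA1, fA2, fA3]; push_cast; ring
    have hvB : lin a (eInd B) = S.card + 1/2 := by
      rw [hval, fB1, fB2, fB3]; push_cast; ring
    have hkey : ∀ K : Finset (Fin n), (K.card = p ∨ K.card = q) →
        lin a (eInd K) ≤ S.card + 1/2 ∧ (lin a (eInd K) = S.card + 1/2 → K = A ∨ K = B) := by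
      intro K hK
      obtain ⟨hsum, hs, ht2⟩ := hfacts K
      by_cases hcrit : (K ∩ S).card = S.card ∧ ((K ∩ U) \ S).card = 1 ∧ (K \ U).card = 0
      · obtain ⟨c1, c2, c3⟩ := hcrit
        constructor
        · rw [hval, c1, c2, c3]; push_cast; ring_nf; rfl
        · intro _
          exact hKAB K c1 c3 (by omega)
      · have hstrict : 2 * (K ∩ S).card + ((K ∩ U) \ S).card
            < 2 * S.card + 1 + 2 * (K \ U).card := by omega
        have hr : lin a (eInd K) < S.card + 1/2 := by
          rw [hval]
          have r1 : (2 * (K ∩ S).card + ((K ∩ U) \ S).card : ℝ)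
              < 2 * S.card + 1 + 2 * (K \ U).card := by exact_mod_cast hstrict
          push_cast
          push_cast at r1
          linarith
        exact ⟨le_of_lt hr, fun h => absurd h (ne_of_lt hr)⟩
    refine ⟨hmemA, hmemB, hABne, a, ?_, by rw [hvA, hvB], ?_⟩
    · rintro z ⟨K, hK, rfl⟩
      rw [hvA]; exact (hkey K hK).1
    · rintro z ⟨K, hK, rfl⟩ heq
      rw [hvA] at heq
      rcases (hkey K hK).2 heq with h | h
      · exact Or.inl (by rw [h])
      · exact Or.inr (by rw [h])

end AuxST12

/-- if `x`, `y` satisfy the tropical Plücker relations and the tropical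
incidence relations, then the regular subdivision `D` of `Δ(p,q;n)` induced by the
weights `e_I ↦ x_I`, `e_J ↦ y_J` introduces no edges that are not edges of `Δ(p,q;n)`. -/
theorem statement12 (n p q : ℕ) (hp : 1 ≤ p) (hpq : p ≤ q) (hq : q + 1 ≤ n)
    (x y : Finset (Fin n) → ℝ)
    (hx : TropPlucker n p x) (hy : TropPlucker n q y)
    (hinc : ∀ S T : Finset (Fin n), S ⊆ T → S.card = p - 1 → T.card = q + 1 →
      MinTwiceOn (T \ S) (fun i => x (insert i S) + y (T.erase i)))
    (W : (Fin n → ℝ) → ℝ)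
    (hWx : ∀ K : Finset (Fin n), K.card = p → W (eInd K) = x K)
    (hWy : ∀ K : Finset (Fin n), K.card = q → W (eInd K) = y K) :
    ∀ u v, IsCellEdge (DeltaVerts n p q) W u v → IsEdge (DeltaVerts n p q) u v := by
  rintro u v ⟨hu, hv, huv, a, c, hdom, hequ, heqv, huniq⟩
  obtain ⟨A, hApq, rfl⟩ := hu
  obtain ⟨B, hBpq, rfl⟩ := hv
  have hABne : A ≠ B := fun h => huv (by rw [h])
  set x' : Finset (Fin n) → ℝ := fun K => x K - ∑ t ∈ K, a t - c with hx'def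
  set y' : Finset (Fin n) → ℝ := fun K => y K - ∑ t ∈ K, a t - c with hy'def
  have hx' : TropPlucker n p x' := trop_shift a c hx
  have hy' : TropPlucker n q y' := trop_shift a c hy
  have hxpos : ∀ K : Finset (Fin n), K.card = p → 0 ≤ x' K := by
    intro K hK
    have hd := hdom (eInd K) ⟨K, Or.inl hK, rfl⟩
    rw [hWx K hK, lin_eInd] at hd
    simp only [hx'def]
    linarith
  have hypos : ∀ K : Finset (Fin n), K.card = q → 0 ≤ y' K := by
    intro K hK
    have hd := hdom (eInd K) ⟨K, Or.inr hK, rfl⟩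
    rw [hWy K hK, lin_eInd] at hd
    simp only [hy'def]
    linarith
  have hzero : ∀ K : Finset (Fin n), lin a (eInd K) + c = W (eInd K) →
      (K.card = p → x' K = 0) ∧ (K.card = q → y' K = 0) := by
    intro K hK
    constructor
    · intro h
      rw [hWx K h, lin_eInd] at hK
      simp only [hx'def]
      linarith
    · intro h
      rw [hWy K h, lin_eInd] at hK
      simp only [hy'def]
      linarith
  have hzA := hzero A hequ
  have hzB := hzero B heqv
  have htx : ∀ K : Finset (Fin n), K.card = p → x' K = 0 → K = A ∨ K = B := by
    intro K hK h0
    have heq2 : lin a (eInd K) + c = W (eInd K) := by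
      rw [hWx K hK, lin_eInd]
      simp only [hx'def] at h0
      linarith
    rcases huniq _ ⟨K, Or.inl hK, rfl⟩ heq2 with h | h
    · exact Or.inl (eInd_inj h)
    · exact Or.inr (eInd_inj h)
  have hty : ∀ K : Finset (Fin n), K.card = q → y' K = 0 → K = A ∨ K = B := by
    intro K hK h0
    have heq2 : lin a (eInd K) + c = W (eInd K) := by
      rw [hWy K hK, lin_eInd]
      simp only [hy'def] at h0
      linarith
    rcases huniq _ ⟨K, Or.inr hK, rfl⟩ heq2 with h | h
    · exact Or.inl (eInd_inj h)
    · exact Or.inr (eInd_inj h)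
  have hinc' : ∀ S T : Finset (Fin n), S ⊆ T → S.card = p - 1 → T.card = q + 1 →
      MinTwiceOn (T \ S) (fun i => x' (insert i S) + y' (T.erase i)) := by
    intro S T hST hS hT
    apply mto_shift (hinc S T hST hS hT)
      (t := (∑ t ∈ S, a t) + (∑ t ∈ T, a t) + 2 * c)
    intro i hi
    have hiT : i ∈ T := (Finset.mem_sdiff.mp hi).1
    have hiS : i ∉ S := (Finset.mem_sdiff.mp hi).2
    have e1 : ∑ t ∈ insert i S, a t = a i + ∑ t ∈ S, a t := Finset.sum_insert hiS
    have e2 : (∑ t ∈ T.erase i, a t) + a i = ∑ t ∈ T, a t := Finset.sum_erase_add T a hiT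
    show x' (insert i S) + y' (T.erase i)
      = x (insert i S) + y (T.erase i) - ((∑ t ∈ S, a t) + (∑ t ∈ T, a t) + 2 * c)
    simp only [hx'def, hy'def]
    rw [e1]
    linarith
  by_cases hcards : A.card = B.card
  · -- same cardinality case
    have hfar : (A \ B).card = 1 := by
      by_contra hne1
      have e1 := Finset.card_sdiff_add_card_inter A B
      have e2 := Finset.card_sdiff_add_card_inter B A
      rw [Finset.inter_comm] at e2
      have hne0 : A \ B ≠ ∅ := by
        intro h
        have h2 : A ⊆ B := Finset.sdiff_eq_empty_iff_subset.mp h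
        exact hABne (Finset.eq_of_subset_of_card_le h2 (by omega))
      have hge2 : 2 ≤ (A \ B).card := by
        have := Finset.card_pos.mpr (Finset.nonempty_of_ne_empty hne0)
        omega
      rcases hApq with hd | hd
      · obtain ⟨C, hC1, hC2, hC3, hC4⟩ := no_third_same hx' hd (hcards ▸ hd) hge2 hxpos
          (hzA.1 hd) (hzB.1 (hcards ▸ hd))
        rcases htx C hC1 hC2 with h | h
        · exact hC3 h
        · exact hC4 h
      · obtain ⟨C, hC1, hC2, hC3, hC4⟩ := no_third_same hy' hd (hcards ▸ hd) hge2 hypos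
          (hzA.2 hd) (hzB.2 (hcards ▸ hd))
        rcases hty C hC1 hC2 with h | h
        · exact hC3 h
        · exact hC4 h
    exact edge1 hp hpq hApq hcards.symm hABne hfar
  · -- different cardinalities: p < q and {A.card, B.card} = {p, q}
    have hplq : p < q := by
      rcases hApq with h | h <;> rcases hBpq with h2 | h2 <;> omega
    rcases hApq with hdA | hdA
    · -- A.card = p, so B.card = q
      have hdB : B.card = q := by rcases hBpq with h | h <;> omega
      have hsub : A ⊆ B := by
        by_contra hnsub
        obtain ⟨C, hC1, hC2, hC3⟩ := no_third_mixed hpq hx' hinc' hdA hdB hnsub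
          hxpos hypos (hzA.1 hdA) (hzB.2 hdB)
        rcases htx C hC1 hC2 with h | h
        · exact hC3 h
        · rw [h] at hC1; omega
      exact edge2 hplq hdA hdB hsub
    · -- A.card = q, so B.card = p; symmetric
      have hdB : B.card = p := by rcases hBpq with h | h <;> omega
      have hsub : B ⊆ A := by
        by_contra hnsub
        obtain ⟨C, hC1, hC2, hC3⟩ := no_third_mixed hpq hx' hinc' hdB hdA hnsub
          hxpos hypos (hzB.1 hdB) (hzA.2 hdA)
        rcases htx C hC1 hC2 with h | h
        · rw [h] at hC1; omega
        · exact hC3 h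
      have hE := edge2 hplq hdB hdA hsub
      obtain ⟨m1, m2, m3, b, hb1, hb2, hb3⟩ := hE
      exact ⟨m2, m1, m3.symm, b, fun z hz => hb2 ▸ hb1 z hz, hb2.symm,
        fun z hz hzz => (hb3 z hz (hb2 ▸ hzz)).symm⟩
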